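/- Let (S, j) be a strict inductive sequence of matrix algebras, i.e., S_n = M_{k_n} and j_{nm} j_{ml} = j_{nl} exactly for all n ≥ m ≥ l, with all j_{nm} ucp. Then the operator system C(S, j) of j-convergent sequences inside ∏_n M_{k_n} is nuclear: the compressions ψ_m : C(S,j) → ⊕_{i≤m} M_{k_i} and the maps φ_m : ⊕_{i≤m} M_{k_i} → C(S,j), (x_1,…,x_m) ↦ (x_1,…,x_m, j_{m+1,m}(x_m), j_{m+2,m}(x_m),…), are cpc, φ_m maps into C(S,j), and φ_m ∘ ψ_m → id pointwise in norm on C(S,j). -/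

import Mathlib

open Filter Topology
open scoped Matrix.Norms.L2Operator ComplexOrder

/-- Positivity of a `μ × μ` matrix with entries in the matrix algebra `M_t(ℂ)`, i.e.
positive-semidefiniteness of the assembled `(μ·t) × (μ·t)` scalar matrix. -/
def BigPos {μ t : ℕ} (x : Fin μ → Fin μ → Matrix (Fin t) (Fin t) ℂ) : Prop :=
  (Matrix.of fun p q : Fin μ × Fin t => x p.1 q.1 p.2 q.2).PosSemidef

section Nets

variable {k : ℕ → ℕ}

/-- j-convergence of a sequence of matrices. -/
def JConvM (j : ∀ n m, Matrix (Fin (k m)) (Fin (k m)) ℂ →ₗ[ℂ] Matrix (Fin (k n)) (Fin (k n)) ℂ)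
    (f : ∀ n, Matrix (Fin (k n)) (Fin (k n)) ℂ) : Prop :=
  Tendsto (fun m => limsup (fun n => ‖f n - j n m (f m)‖) atTop) atTop (𝓝 0)

end Nets

/-- Let `(S, j)` be a strict inductive sequence of matrix algebras
`S n = M_{k n}` with ucp connecting maps.  Then the operator system `C(S,j)` of j-convergent
sequences inside `∏ₙ M_{k n}` is nuclear: the compressions
`ψ m : C(S,j) → ⊕_{i ≤ m} M_{k i}` and the maps
`φ m : (x₁,…,x_m) ↦ (x₁,…,x_m, j_{m+1,m} x_m, j_{m+2,m} x_m, …)` are completely positive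
contractions, `φ m` maps into `C(S,j)`, and `φ m ∘ ψ m → id` pointwise in norm on `C(S,j)`. -/
theorem stmt17 (k : ℕ → ℕ)
    (j : ∀ n m, Matrix (Fin (k m)) (Fin (k m)) ℂ →ₗ[ℂ] Matrix (Fin (k n)) (Fin (k n)) ℂ)
    (hcontr : ∀ n m, m ≤ n → ∀ x, ‖j n m x‖ ≤ ‖x‖)
    (hunital : ∀ n m, m ≤ n → j n m 1 = 1)
    (hcp : ∀ n m, m ≤ n → ∀ (r : ℕ) (x : Fin r → Fin r → Matrix (Fin (k m)) (Fin (k m)) ℂ),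
      BigPos x → BigPos (fun i l => j n m (x i l)))
    (hstrict : ∀ n m l, l ≤ m → m ≤ n → (j n m).comp (j m l) = j n l) :
    -- the compressions `ψ m` are completely positive contractions
    (∀ m (f : lp (fun n => Matrix (Fin (k n)) (Fin (k n)) ℂ) ⊤),
      ‖(fun i : Fin (m + 1) => f i : ∀ i : Fin (m + 1), Matrix (Fin (k i)) (Fin (k i)) ℂ)‖
        ≤ ‖f‖) ∧
    (∀ (m r : ℕ) (x : Fin r → Fin r → lp (fun n => Matrix (Fin (k n)) (Fin (k n)) ℂ) ⊤),
      (∀ n, BigPos (fun a b => x a b n)) →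
      ∀ i : Fin (m + 1), BigPos (fun a b => x a b i)) ∧
    -- `φ m` maps into `C(S,j)` and is a completely positive contraction
    (∀ (m : ℕ) (x : ∀ i : Fin (m + 1), Matrix (Fin (k i)) (Fin (k i)) ℂ)
        (g : lp (fun n => Matrix (Fin (k n)) (Fin (k n)) ℂ) ⊤),
      (∀ n (h : n ≤ m), g n = x ⟨n, Nat.lt_succ_of_le h⟩) →
      (∀ n, m < n → g n = j n m (x ⟨m, Nat.lt_succ_self m⟩)) →
      JConvM j (fun n => g n) ∧ ‖g‖ ≤ ‖x‖) ∧
    (∀ (m r : ℕ) (x : Fin r → Fin r → ∀ i : Fin (m + 1), Matrix (Fin (k i)) (Fin (k i)) ℂ)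
        (g : Fin r → Fin r → lp (fun n => Matrix (Fin (k n)) (Fin (k n)) ℂ) ⊤),
      (∀ a b n (h : n ≤ m), g a b n = x a b ⟨n, Nat.lt_succ_of_le h⟩) →
      (∀ a b n, m < n → g a b n = j n m (x a b ⟨m, Nat.lt_succ_self m⟩)) →
      (∀ i : Fin (m + 1), BigPos (fun a b => x a b i)) →
      ∀ n, BigPos (fun a b => g a b n)) ∧
    -- `φ m ∘ ψ m → id` pointwise in norm on `C(S,j)`
    (∀ f : lp (fun n => Matrix (Fin (k n)) (Fin (k n)) ℂ) ⊤, JConvM j (fun n => f n) →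
      ∀ G : ℕ → lp (fun n => Matrix (Fin (k n)) (Fin (k n)) ℂ) ⊤,
      (∀ m n, n ≤ m → G m n = f n) →
      (∀ m n, m < n → G m n = j n m (f m)) →
      Tendsto (fun m => ‖G m - f‖) atTop (𝓝 0)) := by
  refine ⟨?_, ?_, ?_, ?_, ?_⟩
  · -- ψ contraction
    intro m f
    rw [pi_norm_le_iff_of_nonneg (norm_nonneg f)]
    intro i
    exact lp.norm_apply_le_norm ENNReal.top_ne_zero f i
  · -- ψ cp
    intro m r x h i
    exact h i
  · -- φ into C(S,j), contraction
    intro m x g h1 h2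
    constructor
    · -- JConvM
      unfold JConvM
      have key : ∀ m' ≥ m, limsup (fun n => ‖g n - j n m' (g m')‖) atTop = 0 := by
        intro m' hm'
        have hev : (fun n => ‖g n - j n m' (g m')‖) =ᶠ[atTop] fun _ => (0 : ℝ) := by
          filter_upwards [eventually_gt_atTop m'] with n hn
          have hn' : m < n := lt_of_le_of_lt hm' hn
          have hgn : g n = j n m (x ⟨m, Nat.lt_succ_self m⟩) := h2 n hn'
          have hgm' : j n m' (g m') = j n m (x ⟨m, Nat.lt_succ_self m⟩) := by
            rcases eq_or_lt_of_le hm' with h | h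
            · rw [← h, h1 m le_rfl]
            · rw [h2 m' h]
              have := congrArg (fun φ => φ (x ⟨m, Nat.lt_succ_self m⟩))
                (hstrict n m' m hm' hn.le)
              simpa using this
          simp [hgn, hgm']
        rw [limsup_congr hev, limsup_const]
      have : (fun m' => limsup (fun n => ‖g n - j n m' (g m')‖) atTop)
          =ᶠ[atTop] fun _ => (0 : ℝ) := by
        filter_upwards [eventually_ge_atTop m] with m' hm' using key m' hm'
      exact Tendsto.congr' this.symm tendsto_const_nhds
    · -- norm
      refine lp.norm_le_of_forall_le (norm_nonneg x) fun n => ?_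
      rcases le_or_gt n m with h | h
      · rw [h1 n h]
        exact norm_le_pi_norm x ⟨n, Nat.lt_succ_of_le h⟩
      · rw [h2 n h]
        exact (hcontr n m h.le _).trans (norm_le_pi_norm x ⟨m, Nat.lt_succ_self m⟩)
  · -- φ cp
    intro m r x g h1 h2 hx n
    rcases le_or_gt n m with h | h
    · have : (fun a b => g a b n) = fun a b => x a b ⟨n, Nat.lt_succ_of_le h⟩ := by
        funext a b; exact h1 a b n h
      rw [this]; exact hx _
    · have : (fun a b => g a b n) = fun a b => j n m (x a b ⟨m, Nat.lt_succ_self m⟩) := by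
        funext a b; exact h2 a b n h
      rw [this]
      exact hcp n m h.le r _ (hx _)
  · -- convergence
    intro f hf G hG1 hG2
    rw [Metric.tendsto_atTop]
    intro ε hε
    -- pick m₀ with limsup < ε/3
    have hf' := Metric.tendsto_atTop.mp hf (ε / 3) (by linarith)
    obtain ⟨m₀, hm₀⟩ := hf'
    have hlim : limsup (fun n => ‖f n - j n m₀ (f m₀)‖) atTop < ε / 3 := by
      have := hm₀ m₀ le_rfl
      rw [Real.dist_eq] at this
      calc limsup (fun n => ‖f n - j n m₀ (f m₀)‖) atTop
          ≤ |limsup (fun n => ‖f n - j n m₀ (f m₀)‖) atTop - 0| := by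
            rw [sub_zero]; exact le_abs_self _
        _ < ε / 3 := this
    have hbdd : IsBoundedUnder (· ≤ ·) atTop (fun n => ‖f n - j n m₀ (f m₀)‖) := by
      refine ⟨‖f‖ + ‖f m₀‖, eventually_map.mpr ?_⟩
      filter_upwards [eventually_ge_atTop m₀] with n hn
      calc ‖f n - j n m₀ (f m₀)‖ ≤ ‖f n‖ + ‖j n m₀ (f m₀)‖ := norm_sub_le _ _
        _ ≤ ‖f‖ + ‖f m₀‖ := add_le_add
            (lp.norm_apply_le_norm ENNReal.top_ne_zero f n) (hcontr n m₀ hn (f m₀))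
    have hev : ∀ᶠ n in atTop, ‖f n - j n m₀ (f m₀)‖ < ε / 3 :=
      Filter.eventually_lt_of_limsup_lt hlim hbdd
    rw [eventually_atTop] at hev
    obtain ⟨N₀, hN₀⟩ := hev
    refine ⟨max N₀ m₀, fun m hm => ?_⟩
    have hmN₀ : N₀ ≤ m := le_trans (le_max_left _ _) hm
    have hmm₀ : m₀ ≤ m := le_trans (le_max_right _ _) hm
    rw [Real.dist_eq, sub_zero, abs_of_nonneg (norm_nonneg _)]
    have hb : ‖G m - f‖ ≤ 2 * (ε / 3) := by
      refine lp.norm_le_of_forall_le (by linarith) fun n => ?_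
      have hcoe : (G m - f) n = G m n - f n := by
        simp [lp.coeFn_sub]
      rw [hcoe]
      rcases le_or_gt n m with h | h
      · rw [hG1 m n h, sub_self, norm_zero]; linarith
      · rw [hG2 m n h]
        have hdecomp : j n m (f m) - f n
            = j n m (f m - j m m₀ (f m₀)) - (f n - j n m₀ (f m₀)) := by
          have := congrArg (fun φ => φ (f m₀)) (hstrict n m m₀ hmm₀ h.le)
          simp only [LinearMap.comp_apply] at this
          rw [map_sub, this]
          abel
        rw [hdecomp]
        calc ‖j n m (f m - j m m₀ (f m₀)) - (f n - j n m₀ (f m₀))‖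
            ≤ ‖j n m (f m - j m m₀ (f m₀))‖ + ‖f n - j n m₀ (f m₀)‖ :=
              norm_sub_le _ _
          _ ≤ ‖f m - j m m₀ (f m₀)‖ + ‖f n - j n m₀ (f m₀)‖ :=
              add_le_add (hcontr n m h.le _) le_rfl
          _ ≤ ε / 3 + ε / 3 := add_le_add
              (hN₀ m hmN₀).le (hN₀ n (le_trans hmN₀ h.le)).le
          _ = 2 * (ε / 3) := by ring
    linarith
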